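/- Let χ ∈ H^s(ℝ²) be a function whose Fourier transform χ̂ satisfies χ̂(ξ) ∈ [0,1] for all ξ, and χ̂(ξ) = 1 on the set (1/2)C̃ where C̃ = {ξ : |ξ₁ - ξ₂| ≤ ε, 1 ≤ |ξ|² ≤ 2}. Define u₀ = (∂₂a₀, -∂₁a₀) with a₀ = ε^{-1/2} log log(1/ε) · χ. Then there is a constant c > 0 independent of ε such that ‖u₀‖_{L²(ℝ²)} ≥ c log log(1/ε), for all sufficiently small ε > 0. -/

import Mathlib

open MeasureTheory Real Filter

noncomputable section

/-- The plane `ℝ²`. -/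
abbrev R2 := EuclideanSpace ℝ (Fin 2)

/-- Fourier transform on `ℝ²`. -/
def FT (f : R2 → ℂ) : R2 → ℂ := FourierTransform.fourier f

/-- Inverse Fourier transform on `ℝ²`. -/
def FTInv (f : R2 → ℂ) : R2 → ℂ := FourierTransformInv.fourierInv f

/-- Partial derivative `∂ᵢ` of a complex-valued function. -/
def pd (i : Fin 2) (f : R2 → ℂ) (x : R2) : ℂ := fderiv ℝ f x (EuclideanSpace.single i 1)

/-- Partial derivative `∂ᵢ` of a real-valued function. -/
def pdR (i : Fin 2) (f : R2 → ℝ) (x : R2) : ℝ := fderiv ℝ f x (EuclideanSpace.single i 1)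

/-- Square of the nonhomogeneous Sobolev `H^τ` norm. -/
def sobolevNormSq (τ : ℝ) (f : R2 → ℂ) : ℝ :=
  ∫ ξ : R2, (1 + ‖ξ‖ ^ 2) ^ τ * ‖FT f ξ‖ ^ 2

/-- The nonhomogeneous Sobolev `H^τ` norm. -/
def sobolevNorm (τ : ℝ) (f : R2 → ℂ) : ℝ := Real.sqrt (sobolevNormSq τ f)

/-- Membership in the Sobolev space `H^τ(ℝ²)`. -/
def InSobolev (τ : ℝ) (f : R2 → ℂ) : Prop :=
  Integrable (fun ξ : R2 => (1 + ‖ξ‖ ^ 2) ^ τ * ‖FT f ξ‖ ^ 2)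

/-- Square of the `L²` norm. -/
def L2NormSq (f : R2 → ℂ) : ℝ := ∫ x : R2, ‖f x‖ ^ 2

/-- The `L²` norm. -/
def L2Norm (f : R2 → ℂ) : ℝ := Real.sqrt (L2NormSq f)

/-- The perpendicular gradient `∇^⊥ a = (∂₂ a, -∂₁ a)`. -/
def gradPerp (a : R2 → ℂ) : Fin 2 → R2 → ℂ := ![fun x => pd 1 a x, fun x => -pd 0 a x]

open FourierTransform Complex

lemma my_ft_conj (f : R2 → ℂ) (ξ : R2) :
    𝓕 (fun x => (starRingEnd ℂ) (f x)) ξ = (starRingEnd ℂ) (𝓕 f (-ξ)) := by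
  rw [Real.fourier_eq', Real.fourier_eq', ← integral_conj]
  congr 1
  ext v
  rw [smul_eq_mul, smul_eq_mul, map_mul, ← Complex.exp_conj]
  congr 2
  rw [map_mul, Complex.conj_I, Complex.conj_ofReal, inner_neg_right]
  push_cast
  ring

lemma schwartz_sq_integrable (φ : SchwartzMap R2 ℂ) :
    Integrable (fun x => ‖φ x‖ ^ 2) := by
  have hb : ∀ x, ‖φ x‖ ≤ (SchwartzMap.seminorm ℝ 0 0) φ := fun x =>
    SchwartzMap.norm_le_seminorm ℝ φ x
  have h1 : Integrable (fun x : R2 => ‖φ x‖) := φ.integrable.norm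
  have h2 := h1.bdd_mul (φ.continuous.norm).aestronglyMeasurable
    (Filter.Eventually.of_forall fun x => by simpa using hb x)
  simpa [sq] using h2

lemma schwartz_plancherel (f : SchwartzMap R2 ℂ) :
    ∫ x : R2, ‖f x‖ ^ 2 = ∫ ξ : R2, ‖𝓕 (⇑f) ξ‖ ^ 2 := by
  have hfint : Integrable (⇑f) := f.integrable
  set F : SchwartzMap R2 ℂ := SchwartzMap.fourierTransformCLM ℂ f with hF
  have hFc : ⇑F = 𝓕 ⇑f := rfl
  have hFint : Integrable (⇑F) := F.integrable
  have hGint : Integrable (fun ξ : R2 => (starRingEnd ℂ) (F ξ)) := by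
    refine hFint.norm.mono' ?_ ?_
    · exact (Complex.continuous_conj.comp F.continuous).aestronglyMeasurable
    · filter_upwards with x; simp
  have hinv : 𝓕⁻ (𝓕 ⇑f) = ⇑f :=
    f.continuous.fourierInv_fourier_eq hfint (hFc ▸ hFint)
  have hG : 𝓕 (fun ξ : R2 => (starRingEnd ℂ) (F ξ)) = fun x => (starRingEnd ℂ) (f x) := by
    ext x
    rw [my_ft_conj, hFc, ← Real.fourierInv_eq_fourier_neg, hinv]
  have hflip : (innerₗ R2).flip = innerₗ R2 := by
    apply LinearMap.ext; intro x; apply LinearMap.ext; intro y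
    simpa using real_inner_comm y x
  have key := VectorFourier.integral_fourierIntegral_smul_eq_flip (L := innerₗ R2)
    Real.continuous_fourierChar continuous_inner hfint hGint
  rw [hflip] at key
  have e1 : VectorFourier.fourierIntegral Real.fourierChar volume (innerₗ R2) (⇑f) = 𝓕 ⇑f := rfl
  have e2 : VectorFourier.fourierIntegral Real.fourierChar volume (innerₗ R2)
      (fun ξ : R2 => (starRingEnd ℂ) (F ξ)) = 𝓕 (fun ξ : R2 => (starRingEnd ℂ) (F ξ)) := rfl
  rw [e1, e2, hG] at key
  have key2 : ∫ ξ : R2, ((‖F ξ‖ ^ 2 : ℝ) : ℂ) = ∫ x : R2, ((‖f x‖ ^ 2 : ℝ) : ℂ) := by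
    have h3 : ∀ z : ℂ, z * (starRingEnd ℂ) z = ((‖z‖ ^ 2 : ℝ) : ℂ) := by
      intro z
      rw [Complex.mul_conj]
      norm_cast
      rw [Complex.normSq_eq_norm_sq]
    simp only [smul_eq_mul] at key
    calc ∫ ξ : R2, ((‖F ξ‖ ^ 2 : ℝ) : ℂ) = ∫ ξ : R2, (𝓕 ⇑f ξ) * (starRingEnd ℂ) (F ξ) := by
          congr 1; ext ξ; rw [← hFc, h3]
      _ = ∫ x : R2, (f x) * (starRingEnd ℂ) (f x) := key
      _ = ∫ x : R2, ((‖f x‖ ^ 2 : ℝ) : ℂ) := by congr 1; ext x; rw [h3]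
  have key3 : ∫ ξ : R2, ‖F ξ‖ ^ 2 = ∫ x : R2, ‖f x‖ ^ 2 :=
    Complex.ofReal_inj.mp (integral_ofReal.symm.trans (key2.trans integral_ofReal))
  rw [show (𝓕 (⇑f)) = ⇑F from hFc.symm]
  exact key3.symm

lemma my_ft_pd (f : SchwartzMap R2 ℂ) (i : Fin 2) (ξ : R2) :
    𝓕 (fun x => fderiv ℝ (⇑f) x (EuclideanSpace.single i 1)) ξ
      = (2 * ↑π * Complex.I * ((ξ i : ℝ) : ℂ)) * 𝓕 (⇑f) ξ := by
  have hfint : Integrable (⇑f) := f.integrable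
  have hfd : Integrable (fderiv ℝ (⇑f)) := by
    have h : ⇑(SchwartzMap.fderivCLM ℝ R2 ℂ f) = fderiv ℝ (⇑f) := by
      ext x : 1; exact SchwartzMap.fderivCLM_apply ℝ f x
    have h2 : Integrable ⇑(SchwartzMap.fderivCLM ℝ R2 ℂ f) := (SchwartzMap.fderivCLM ℝ R2 ℂ f).integrable
    rwa [h] at h2
  have h2 : 𝓕 (fun x => fderiv ℝ (⇑f) x (EuclideanSpace.single i 1)) ξ
      = (𝓕 (fderiv ℝ (⇑f)) ξ) (EuclideanSpace.single i 1) :=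
    (Real.fourier_continuousLinearMap_apply hfd).symm
  rw [h2, Real.fourier_fderiv hfint f.differentiable hfd,
    VectorFourier.fourierSMulRight_apply]
  have hinner : ((-innerSL ℝ (E := R2)) ξ) (EuclideanSpace.single i (1:ℝ)) = -(ξ i) := by
    simp [EuclideanSpace.inner_single_right]
  rw [hinner]
  rw [smul_eq_mul, Complex.real_smul]
  push_cast
  ring

lemma norm_sq_R2 (x : R2) : ‖x‖ ^ 2 = (x 0) ^ 2 + (x 1) ^ 2 := by
  rw [EuclideanSpace.norm_eq, Real.sq_sqrt (by positivity)]
  simp [Fin.sum_univ_two, Real.norm_eq_abs, sq_abs]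

lemma shear_preimage (a b d : ℝ) :
    {x : R2 | x 0 ∈ Set.Ioo a b ∧ x 1 ∈ Set.Ioo (x 0) (x 0 + d)}
      = ((MeasurableEquiv.piFinTwo (fun _ : Fin 2 => ℝ)) ∘
          (MeasurableEquiv.toLp 2 (Fin 2 → ℝ)).symm) ⁻¹'
        (regionBetween (fun t => t) (fun t => t + d) (Set.Ioo a b)) := by
  ext x
  simp [regionBetween, MeasurableEquiv.piFinTwo_apply, MeasurableEquiv.coe_toLp,
    Function.comp]

lemma shear_measPres :
    MeasurePreserving ((MeasurableEquiv.piFinTwo (fun _ : Fin 2 => ℝ)) ∘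
      (MeasurableEquiv.toLp 2 (Fin 2 → ℝ)).symm) volume volume :=
  (volume_preserving_piFinTwo (fun _ : Fin 2 => ℝ)).comp
    (EuclideanSpace.volume_preserving_symm_measurableEquiv_toLp (Fin 2))

lemma region_meas (a b d : ℝ) :
    MeasurableSet (regionBetween (fun t : ℝ => t) (fun t => t + d) (Set.Ioo a b)) :=
  measurableSet_regionBetween measurable_id (measurable_id.add_const d) measurableSet_Ioo

lemma vol_region (a b d : ℝ) (hab : a ≤ b) (hd : 0 ≤ d) :
    volume (regionBetween (fun t : ℝ => t) (fun t => t + d) (Set.Ioo a b))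
      = ENNReal.ofReal ((b - a) * d) := by
  have f_int : IntegrableOn (fun t : ℝ => t) (Set.Ioo a b) volume :=
    (continuous_id.integrableOn_Icc).mono_set Set.Ioo_subset_Icc_self
  have g_int : IntegrableOn (fun t : ℝ => t + d) (Set.Ioo a b) volume :=
    ((continuous_id.add continuous_const).integrableOn_Icc).mono_set Set.Ioo_subset_Icc_self
  rw [Measure.volume_eq_prod, volume_regionBetween_eq_integral f_int g_int measurableSet_Ioo
      (fun x _ => by simp; linarith)]
  congr 1
  have : ((fun t : ℝ => t + d) - fun t : ℝ => t) = fun _ : ℝ => d := by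
    ext t; simp
  rw [this, setIntegral_const, Real.volume_real_Ioo_of_le hab, smul_eq_mul]

lemma vol_shear (a b d : ℝ) (hab : a ≤ b) (hd : 0 ≤ d) :
    volume {x : R2 | x 0 ∈ Set.Ioo a b ∧ x 1 ∈ Set.Ioo (x 0) (x 0 + d)}
      = ENNReal.ofReal ((b - a) * d) := by
  rw [shear_preimage, shear_measPres.measure_preimage (region_meas a b d).nullMeasurableSet,
    vol_region a b d hab hd]

lemma shear_measurable (a b d : ℝ) :
    MeasurableSet {x : R2 | x 0 ∈ Set.Ioo a b ∧ x 1 ∈ Set.Ioo (x 0) (x 0 + d)} := by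
  rw [shear_preimage]
  exact (region_meas a b d).preimage shear_measPres.measurable


set_option maxHeartbeats 1000000 in
/-- With `χ` Schwartz, `0 ≤ χ̂ ≤ 1`, `χ̂ = 1` on `(1/2)C̃` where
`C̃ = {ξ : |ξ₁-ξ₂| ≤ ε, 1 ≤ |ξ|² ≤ 2}`, and `u₀ = ∇^⊥(ε^{-1/2} log log(1/ε) χ)`, one has
`‖u₀‖_{L²} ≥ c log log(1/ε)` for a constant `c > 0` independent of `ε`,
for all sufficiently small `ε > 0`. -/
theorem large_initial_data (s : ℝ) (hs : 2 < s) :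
    ∃ c > 0, ∃ ε₀ > 0, ∀ ε : ℝ, 0 < ε → ε < ε₀ →
      ∀ χ : SchwartzMap R2 ℂ,
        (∀ ξ : R2, ∃ r : ℝ, 0 ≤ r ∧ r ≤ 1 ∧ FT (⇑χ) ξ = (r : ℂ)) →
        (∀ ξ : R2, |(2 : ℝ) • ξ 0 - (2 : ℝ) • ξ 1| ≤ ε →
          1 ≤ ‖(2 : ℝ) • ξ‖ ^ 2 → ‖(2 : ℝ) • ξ‖ ^ 2 ≤ 2 → FT (⇑χ) ξ = 1) →
        Real.sqrt (∑ i, L2NormSq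
            (gradPerp (fun x => ((ε ^ (-(1 : ℝ) / 2) * Real.log (Real.log (1 / ε)) : ℝ) : ℂ)
              * χ x) i))
          ≥ c * Real.log (Real.log (1 / ε)) := by
  refine ⟨1/4, by norm_num, min (1/5) (Real.exp (-Real.exp 1)),
    lt_min (by norm_num) (Real.exp_pos _), ?_⟩
  intro ε hε hε' χ _h01 hS
  have hε5 : ε < 1/5 := lt_of_lt_of_le hε' (min_le_left _ _)
  have hεe : ε < Real.exp (-Real.exp 1) := lt_of_lt_of_le hε' (min_le_right _ _)
  set L : ℝ := Real.log (Real.log (1/ε)) with hLdef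
  have hlog1 : Real.exp 1 < Real.log (1/ε) := by
    have h1 : Real.exp (Real.exp 1) < 1/ε := by
      rw [lt_div_iff₀ hε]
      have := mul_lt_mul_of_pos_left hεe (Real.exp_pos (Real.exp 1))
      rwa [← Real.exp_add, add_neg_cancel, Real.exp_zero] at this
    calc Real.exp 1 = Real.log (Real.exp (Real.exp 1)) := (Real.log_exp _).symm
      _ < Real.log (1/ε) := Real.log_lt_log (Real.exp_pos _) h1
  have hL1 : 1 < L := by
    calc (1:ℝ) = Real.log (Real.exp 1) := (Real.log_exp 1).symm
      _ < L := Real.log_lt_log (Real.exp_pos _) hlog1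
  have hL0 : 0 < L := lt_trans one_pos hL1
  set m : ℝ := ε ^ (-(1:ℝ)/2) * L with hmdef
  have hm0 : 0 < m := mul_pos (Real.rpow_pos_of_pos hε _) hL0
  set A : R2 → ℂ := fun x => ((m : ℝ) : ℂ) * χ x with hA
  -- the derivative Schwartz function
  set φ : SchwartzMap R2 ℂ := LineDeriv.lineDerivOp (EuclideanSpace.single (1 : Fin 2) (1:ℝ)) χ
    with hφ
  have hφc : ⇑φ = fun x => fderiv ℝ (⇑χ) x (EuclideanSpace.single (1 : Fin 2) (1:ℝ)) := by
    ext x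
    exact SchwartzMap.lineDerivOp_apply_eq_fderiv _ χ x
  have hpd : (fun x => pd 1 A x) = fun x => ((m : ℝ) : ℂ) * φ x := by
    ext x
    show fderiv ℝ A x (EuclideanSpace.single 1 1) = _
    rw [hA]
    rw [fderiv_const_mul (χ.differentiable.differentiableAt) (((m : ℝ) : ℂ))]
    rw [ContinuousLinearMap.smul_apply, smul_eq_mul, hφc]
  -- sum splitting
  have hsum : ∑ i, L2NormSq (gradPerp A i)
      = L2NormSq (fun x => pd 1 A x) + L2NormSq (fun x => -pd 0 A x) := by
    rw [Fin.sum_univ_two]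
    rfl
  have h2nonneg : 0 ≤ L2NormSq (fun x => -pd 0 A x) :=
    integral_nonneg fun x => by positivity
  -- first term
  have hfirst : L2NormSq (fun x => pd 1 A x) = m ^ 2 * ∫ x : R2, ‖φ x‖ ^ 2 := by
    rw [L2NormSq]
    calc ∫ x : R2, ‖pd 1 A x‖ ^ 2 = ∫ x : R2, m ^ 2 • ‖φ x‖ ^ 2 := by
          congr 1; ext x
          rw [congrFun hpd x, norm_mul, mul_pow, Complex.norm_real, Real.norm_eq_abs,
            _root_.sq_abs, smul_eq_mul]
      _ = m ^ 2 • ∫ x : R2, ‖φ x‖ ^ 2 := integral_smul _ _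
      _ = m ^ 2 * ∫ x : R2, ‖φ x‖ ^ 2 := by rw [smul_eq_mul]
  -- Plancherel
  have hplan : ∫ x : R2, ‖φ x‖ ^ 2 = ∫ ξ : R2, ‖𝓕 (⇑φ) ξ‖ ^ 2 := schwartz_plancherel φ
  -- lower bound for the Fourier side
  set S : Set R2 := {x : R2 | x 0 ∈ Set.Ioo (2/5) (9/20) ∧ x 1 ∈ Set.Ioo (x 0) (x 0 + ε/4)}
    with hSdef
  have hSmeas : MeasurableSet S := shear_measurable _ _ _
  have hSvol : volume S = ENNReal.ofReal ((9/20 - 2/5) * (ε/4)) :=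
    vol_shear _ _ _ (by norm_num) (by linarith)
  have hpoint : ∀ ξ : R2, ξ ∈ S → (6:ℝ) ≤ ‖𝓕 (⇑φ) ξ‖ ^ 2 := by
    intro ξ hξ
    obtain ⟨h0, h1⟩ := hξ
    rw [Set.mem_Ioo] at h0 h1
    have hχ1 : 𝓕 (⇑χ) ξ = 1 := by
      apply hS ξ
      · rw [smul_eq_mul, smul_eq_mul, abs_le]
        constructor <;> [linarith [h1.1, h1.2]; linarith [h1.1, h1.2]]
      · rw [norm_smul, mul_pow, norm_sq_R2]
        have : ‖(2:ℝ)‖ = 2 := by simp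
        rw [this]
        nlinarith [h0.1, h0.2, h1.1, h1.2]
      · rw [norm_smul, mul_pow, norm_sq_R2]
        have : ‖(2:ℝ)‖ = 2 := by simp
        rw [this]
        nlinarith [h0.1, h0.2, h1.1, h1.2]
    have hft : 𝓕 (⇑φ) ξ = (2 * ↑π * Complex.I * ((ξ 1 : ℝ) : ℂ)) := by
      rw [hφc, my_ft_pd χ 1 ξ, hχ1, mul_one]
    rw [hft]
    have hn : ‖(2 * ↑π * Complex.I * ((ξ 1 : ℝ) : ℂ))‖ ^ 2 = (2*π)^2 * (ξ 1)^2 := by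
      rw [show (2 * ↑π * Complex.I * ((ξ 1 : ℝ) : ℂ)) =
        (((2*π : ℝ)) : ℂ) * Complex.I * ((ξ 1 : ℝ) : ℂ) by push_cast; ring]
      rw [norm_mul, norm_mul, Complex.norm_real, Complex.norm_I, mul_one, Complex.norm_real,
        Real.norm_eq_abs, Real.norm_eq_abs, mul_pow, _root_.sq_abs, _root_.sq_abs]
    rw [hn]
    have hπ : (3.141592:ℝ) < π := Real.pi_gt_d6
    have hξ1 : (2/5 : ℝ) < ξ 1 := lt_trans h0.1 h1.1
    have e1 : ((2:ℝ)*3.141592)^2 ≤ (2*π)^2 := by nlinarith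
    have e2 : ((2:ℝ)/5)^2 ≤ (ξ 1)^2 := by nlinarith
    nlinarith [mul_le_mul e1 e2 (by positivity) (by positivity)]
  have hJint : Integrable (fun ξ : R2 => ‖𝓕 (⇑φ) ξ‖ ^ 2) :=
    schwartz_sq_integrable (SchwartzMap.fourierTransformCLM ℂ φ)
  have hJnonneg : 0 ≤ᵐ[volume] fun ξ : R2 => ‖𝓕 (⇑φ) ξ‖ ^ 2 :=
    Filter.Eventually.of_forall fun ξ => by positivity
  have hvolfin : volume S ≠ ⊤ := by rw [hSvol]; exact ENNReal.ofReal_ne_top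
  have hlow1 : 6 * (volume S).toReal ≤ ∫ ξ in S, ‖𝓕 (⇑φ) ξ‖ ^ 2 :=
    by have := setIntegral_ge_of_const_le hSmeas hvolfin hpoint hJint.integrableOn; rw [smul_eq_mul, mul_comm] at this; exact this
  have hlow2 : ∫ ξ in S, ‖𝓕 (⇑φ) ξ‖ ^ 2 ≤ ∫ ξ : R2, ‖𝓕 (⇑φ) ξ‖ ^ 2 :=
    setIntegral_le_integral hJint hJnonneg
  have hvolval : (volume S).toReal = (9/20 - 2/5) * (ε/4) := by
    rw [hSvol, ENNReal.toReal_ofReal (by norm_num; linarith)]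
  have hJ : 3*ε/40 ≤ ∫ ξ : R2, ‖𝓕 (⇑φ) ξ‖ ^ 2 := by
    have := le_trans hlow1 hlow2
    rw [hvolval] at this
    linarith
  -- rpow arithmetic
  have hrp : (ε ^ (-(1:ℝ)/2)) ^ 2 = ε⁻¹ := by
    rw [← Real.rpow_natCast (ε ^ (-(1:ℝ)/2)) 2, ← Real.rpow_mul hε.le]
    rw [show (-(1:ℝ)/2 * ((2:ℕ):ℝ)) = -1 by push_cast; ring, Real.rpow_neg_one]
  have hm2 : m ^ 2 * (3*ε/40) = 3 * L^2 / 40 := by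
    rw [hmdef, mul_pow, hrp]
    field_simp
  have htotal : L^2/16 ≤ ∑ i, L2NormSq (gradPerp A i) := by
    rw [hsum, hfirst, hplan]
    have h1 : m ^ 2 * (3*ε/40) ≤ m ^ 2 * ∫ ξ : R2, ‖𝓕 (⇑φ) ξ‖ ^ 2 :=
      mul_le_mul_of_nonneg_left hJ (sq_nonneg m)
    nlinarith [h1, hm2, h2nonneg, sq_nonneg L]
  have hfinal : (1/4 : ℝ) * L ≤ Real.sqrt (∑ i, L2NormSq (gradPerp A i)) := by
    have h1 : (1/4 : ℝ) * L = Real.sqrt ((1/4 * L)^2) :=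
      (Real.sqrt_sq (by positivity)).symm
    rw [h1]
    apply Real.sqrt_le_sqrt
    nlinarith [htotal, sq_nonneg L]
  exact hfinal


end
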